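/- If L ≤ 1 and R ≤ 1, then all eigenvalues of H_N^{(L,R)} = −L|0⟩⟨0| − R|N⟩⟨N| + H_N^walk are at least −2. -/

import Mathlib

open Matrix Real Finset

/-- The negative adjacency matrix of the path on vertices `0,…,N`. -/
noncomputable def walkM (N : ℕ) : Matrix (Fin (N+1)) (Fin (N+1)) ℝ :=
  Matrix.of fun i j => if (i:ℕ)+1 = (j:ℕ) ∨ (j:ℕ)+1 = (i:ℕ) then -1 else 0

/-- `H_N^{(L,R)} = −L|0⟩⟨0| − R|N⟩⟨N| + H_N^walk`. -/
noncomputable def HLR (N : ℕ) (L R : ℝ) : Matrix (Fin (N+1)) (Fin (N+1)) ℝ :=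
  walkM N + Matrix.single 0 0 (-L)
    + Matrix.single (Fin.last N) (Fin.last N) (-R)

/-- `μ` is an eigenvalue of the real matrix `M`. -/
def hasEig {n : Type*} [Fintype n] (M : Matrix n n ℝ) (μ : ℝ) : Prop :=
  ∃ v : n → ℝ, v ≠ 0 ∧ M.mulVec v = μ • v

lemma stdQuad {n : ℕ} (a : Fin n) (c : ℝ) (v : Fin n → ℝ) :
    ∑ i, v i * (Matrix.single a a c).mulVec v i = c * (v a * v a) := by
  simp [Matrix.mulVec, dotProduct, Matrix.single, ite_and, Finset.mul_sum]
  ring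

lemma walkQuad (N : ℕ) (v : Fin (N+1) → ℝ) (u : ℕ → ℝ)
    (hu : ∀ i : Fin (N+1), u i = v i) :
    ∑ i, v i * (walkM N).mulVec v i = -2 * ∑ k ∈ range N, u k * u (k+1) := by
  have step1 : ∑ i, v i * (walkM N).mulVec v i
      = ∑ a ∈ range (N+1), ∑ b ∈ range (N+1),
          ((if a+1 = b then -(u a * u b) else 0) +
          (if b+1 = a then -(u a * u b) else 0)) := by
    rw [← Fin.sum_univ_eq_sum_range
      (fun a => ∑ b ∈ range (N+1), ((if a+1 = b then -(u a * u b) else 0) +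
          (if b+1 = a then -(u a * u b) else 0)))]
    apply Finset.sum_congr rfl
    intro i _
    rw [← Fin.sum_univ_eq_sum_range
      (fun b => ((if (i:ℕ)+1 = b then -(u i * u b) else 0) +
          (if b+1 = (i:ℕ) then -(u i * u b) else 0)))]
    simp only [Matrix.mulVec, dotProduct, walkM, Matrix.of_apply, Finset.mul_sum]
    apply Finset.sum_congr rfl
    intro b _
    have h1 : u i = v i := hu _
    have h2 : u b = v b := hu _
    by_cases hab : ((i:ℕ)+1 = (b:ℕ))
    · have : ¬ ((b:ℕ)+1 = (i:ℕ)) := by omega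
      simp [hab, this, h1, h2]
    · by_cases hba : ((b:ℕ)+1 = (i:ℕ))
      · simp [hab, hba, h1, h2]
      · simp [hab, hba]
  rw [step1]
  have split : ∀ a ∈ range (N+1), ∑ b ∈ range (N+1),
      ((if a+1 = b then -(u a * u b) else 0) + (if b+1 = a then -(u a * u b) else 0))
      = (∑ b ∈ range (N+1), (if a+1 = b then -(u a * u b) else 0))
      + (∑ b ∈ range (N+1), (if b+1 = a then -(u a * u b) else 0)) := by
    intro a _; rw [Finset.sum_add_distrib]
  rw [Finset.sum_congr rfl split, Finset.sum_add_distrib]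
  have key1 : ∑ a ∈ range (N+1), ∑ b ∈ range (N+1),
      (if a+1 = b then -(u a * u b) else 0) = -∑ k ∈ range N, u k * u (k+1) := by
    have e1 : ∀ a ∈ range (N+1), ∑ b ∈ range (N+1), (if a+1 = b then -(u a * u b) else 0)
        = if a+1 ∈ range (N+1) then -(u a * u (a+1)) else 0 :=
      fun a _ => Finset.sum_ite_eq (range (N+1)) (a+1) (fun b => -(u a * u b))
    rw [Finset.sum_congr rfl e1, Finset.sum_range_succ,
      if_neg (by simp), add_zero,
      Finset.sum_congr rfl (fun a ha => if_pos (by rw [mem_range] at *; omega))]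
    simp
  have key2 : ∑ a ∈ range (N+1), ∑ b ∈ range (N+1),
      (if b+1 = a then -(u a * u b) else 0) = -∑ k ∈ range N, u k * u (k+1) := by
    rw [Finset.sum_comm, ← key1]
    apply Finset.sum_congr rfl; intro b _; apply Finset.sum_congr rfl; intro a _
    by_cases h : b + 1 = a <;> simp [h, mul_comm]
  rw [key1, key2]; ring

/-- If `L ≤ 1` and `R ≤ 1`, then all eigenvalues of `H_N^{(L,R)}` are at
least `−2`. -/
theorem stmt_13 (N : ℕ) (L R : ℝ) (hL : L ≤ 1) (hR : R ≤ 1) :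
    ∀ μ : ℝ, hasEig (HLR N L R) μ → -2 ≤ μ := by
  rintro μ ⟨v, hv, heq⟩
  set u : ℕ → ℝ := fun n => if h : n < N+1 then v ⟨n, h⟩ else 0 with hudef
  have hu : ∀ i : Fin (N+1), u i = v i := by
    intro i; simp only [hudef, i.isLt, dif_pos, Fin.eta]
  -- quadratic form of HLR
  have hQ : ∑ i, v i * (HLR N L R).mulVec v i
      = -2 * (∑ k ∈ range N, u k * u (k+1)) - L * (u 0 * u 0) - R * (u N * u N) := by
    have hadd : (HLR N L R).mulVec v
        = (walkM N).mulVec v + (Matrix.single 0 0 (-L)).mulVec v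
          + (Matrix.single (Fin.last N) (Fin.last N) (-R)).mulVec v := by
      simp [HLR, Matrix.add_mulVec]
    simp only [hadd, Pi.add_apply, mul_add, Finset.sum_add_distrib]
    rw [walkQuad N v u hu, stdQuad, stdQuad]
    have h0 : u 0 = v 0 := by
      have := hu 0; simpa using this
    have hN : u N = v (Fin.last N) := by
      have := hu (Fin.last N); simpa [Fin.last] using this
    rw [h0, hN]; ring
  -- eigenvalue relation
  have hS : ∑ i, v i * (HLR N L R).mulVec v i = μ * ∑ i, v i * v i := by
    rw [heq]; simp [Finset.mul_sum, smul_eq_mul]; apply Finset.sum_congr rfl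
    intro i _; ring
  -- norm positivity
  obtain ⟨i0, hi0⟩ := Function.ne_iff.mp hv
  have hSpos : 0 < ∑ i, v i * v i := by
    have hle : v i0 * v i0 ≤ ∑ i, v i * v i :=
      Finset.single_le_sum (fun i _ => mul_self_nonneg (v i)) (Finset.mem_univ i0)
    have : 0 < v i0 * v i0 := mul_self_pos.mpr hi0
    linarith
  -- sum of squares identity
  have hB : ∑ i, v i * v i = ∑ k ∈ range (N+1), u k * u k := by
    rw [← Fin.sum_univ_eq_sum_range (fun k => u k * u k)]
    exact Finset.sum_congr rfl (fun i _ => by rw [hu i])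
  have hB1 : ∑ k ∈ range (N+1), u k * u k
      = ∑ k ∈ range N, u k * u k + u N * u N := Finset.sum_range_succ _ _
  have hB2 : ∑ k ∈ range (N+1), u k * u k
      = ∑ k ∈ range N, u (k+1) * u (k+1) + u 0 * u 0 := Finset.sum_range_succ' _ _
  have hE : ∑ k ∈ range N, (u k - u (k+1))^2
      = (∑ k ∈ range N, u k * u k) + (∑ k ∈ range N, u (k+1) * u (k+1))
        - 2 * ∑ k ∈ range N, u k * u (k+1) := by
    rw [Finset.mul_sum, ← Finset.sum_add_distrib, ← Finset.sum_sub_distrib]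
    apply Finset.sum_congr rfl; intro k _; ring
  have hsq : 0 ≤ ∑ k ∈ range N, (u k - u (k+1))^2 :=
    Finset.sum_nonneg (fun k _ => sq_nonneg _)
  have h0nn : 0 ≤ u 0 * u 0 := mul_self_nonneg _
  have hNnn : 0 ≤ u N * u N := mul_self_nonneg _
  -- combine
  have hmain : μ * ∑ i, v i * v i ≥ -2 * ∑ i, v i * v i := by
    rw [← hS, hQ]
    nlinarith [hsq, hE, hB1, hB2, hB, h0nn, hNnn,
      mul_nonneg (sub_nonneg.mpr hL) h0nn, mul_nonneg (sub_nonneg.mpr hR) hNnn]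
  nlinarith [hmain, hSpos]
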